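/- arXiv:0705.3911 — 2 statements merged into one kernel-verified Lean document; each statement's English description precedes it below -/
import Mathlib

section
/- Let $f \in \mathbb{C}[[x,y]]$ with $\mathrm{ord}(f) = m$, and let $g \in \mathbb{C}[[x,y]]$. Fix $a, b \in \mathbb{C}[[x,y]]$ and set $x_a = x + \varepsilon a$, $y_b = y + \varepsilon b$ in $R = \mathbb{C}[[x,y]][\varepsilon]/(\varepsilon^2)$. Then $f + \varepsilon g \in \langle x_a, y_b \rangle^m$ (as an ideal of $R$) if and only if $g - a \cdot \partial f/\partial x - b \cdot \partial f/\partial y \in \langle x, y \rangle^m$ in $\mathbb{C}[[x,y]]$. -/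
set_option synthInstance.maxHeartbeats 1000000
set_option maxHeartbeats 2000000

open MvPowerSeries TrivSqZeroExt DualNumber

noncomputable section

abbrev R2 := MvPowerSeries (Fin 2) ℂ

def Mxy : Ideal R2 := Ideal.span {MvPowerSeries.X 0, MvPowerSeries.X 1}

/-- Formal partial derivative of a power series in two variables. -/
def pd (i : Fin 2) (f : R2) : R2 :=
  fun d => (d i + 1 : ℂ) * MvPowerSeries.coeff (R := ℂ) (d + Finsupp.single i 1) f

lemma coeff_pd (i : Fin 2) (f : R2) (d : Fin 2 →₀ ℕ) :
    MvPowerSeries.coeff (R := ℂ) d (pd i f) =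
      ((d i : ℂ) + 1) * MvPowerSeries.coeff (R := ℂ) (d + Finsupp.single i 1) f := rfl

lemma pd_add (i : Fin 2) (f g : R2) : pd i (f + g) = pd i f + pd i g := by
  apply MvPowerSeries.ext; intro d
  simp [coeff_pd, mul_add]

lemma pd_mul (i : Fin 2) (f g : R2) : pd i (f * g) = pd i f * g + f * pd i g := by
  classical
  apply MvPowerSeries.ext; intro d
  set e : Fin 2 →₀ ℕ := Finsupp.single i 1 with he
  rw [map_add, coeff_pd, MvPowerSeries.coeff_mul, MvPowerSeries.coeff_mul,
    MvPowerSeries.coeff_mul, Finset.mul_sum]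
  have key : ∀ p ∈ Finset.HasAntidiagonal.antidiagonal (d + e),
      ((d i : ℂ) + 1) * (MvPowerSeries.coeff (R := ℂ) p.1 f * MvPowerSeries.coeff (R := ℂ) p.2 g) =
      (p.1 i : ℂ) * (MvPowerSeries.coeff (R := ℂ) p.1 f * MvPowerSeries.coeff (R := ℂ) p.2 g) +
      (p.2 i : ℂ) * (MvPowerSeries.coeff (R := ℂ) p.1 f * MvPowerSeries.coeff (R := ℂ) p.2 g) := by
    intro p hp
    rw [Finset.HasAntidiagonal.mem_antidiagonal] at hp
    have : p.1 i + p.2 i = d i + 1 := by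
      have := DFunLike.congr_fun hp i
      simpa [he, Finsupp.single_apply] using this
    rw [← add_mul]
    congr 1
    rw [← Nat.cast_add, this]
    push_cast
    ring
  rw [Finset.sum_congr rfl key, Finset.sum_add_distrib]
  congr 1
  · -- first sum
    rw [eq_comm]
    refine Finset.sum_of_injOn (fun p => (p.1 + e, p.2)) ?_ ?_ ?_ ?_
    · intro p _ q _ hpq
      simp only [Prod.mk.injEq] at hpq
      exact Prod.ext (add_right_cancel hpq.1) hpq.2
    · intro p hp
      simp only [Finset.coe_sort_coe, Finset.mem_coe, Finset.HasAntidiagonal.mem_antidiagonal] at *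
      rw [add_right_comm, hp]
    · intro q hq hq'
      rw [Finset.HasAntidiagonal.mem_antidiagonal] at hq
      by_cases h0 : q.1 i = 0
      · simp [h0]
      · exfalso
        apply hq'
        refine ⟨(q.1 - e, q.2), ?_, ?_⟩
        · simp only [Finset.coe_sort_coe, Finset.mem_coe, Finset.HasAntidiagonal.mem_antidiagonal]
          have hle : e ≤ q.1 := by
            rw [he, Finsupp.single_le_iff]
            omega
          have : q.1 - e + q.2 + e = d + e := by
            rw [add_right_comm, tsub_add_cancel_of_le hle, hq]
          exact add_right_cancel this
        · have hle : e ≤ q.1 := by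
            rw [he, Finsupp.single_le_iff]
            omega
          simp [tsub_add_cancel_of_le hle]
    · intro p hp
      have : (p.1 + e) i = p.1 i + 1 := by simp [he, Finsupp.single_apply]
      rw [coeff_pd, ← he, this]
      push_cast
      ring
  · -- second sum
    rw [eq_comm]
    refine Finset.sum_of_injOn (fun p => (p.1, p.2 + e)) ?_ ?_ ?_ ?_
    · intro p _ q _ hpq
      simp only [Prod.mk.injEq] at hpq
      exact Prod.ext hpq.1 (add_right_cancel hpq.2)
    · intro p hp
      simp only [Finset.coe_sort_coe, Finset.mem_coe, Finset.HasAntidiagonal.mem_antidiagonal] at *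
      rw [← add_assoc, hp]
    · intro q hq hq'
      rw [Finset.HasAntidiagonal.mem_antidiagonal] at hq
      by_cases h0 : q.2 i = 0
      · simp [h0]
      · exfalso
        apply hq'
        have hle : e ≤ q.2 := by
          rw [he, Finsupp.single_le_iff]
          omega
        refine ⟨(q.1, q.2 - e), ?_, ?_⟩
        · simp only [Finset.coe_sort_coe, Finset.mem_coe, Finset.HasAntidiagonal.mem_antidiagonal]
          have : q.1 + (q.2 - e) + e = d + e := by
            rw [add_assoc, tsub_add_cancel_of_le hle, hq]
          exact add_right_cancel this
        · simp [tsub_add_cancel_of_le hle]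
    · intro p hp
      have : (p.2 + e) i = p.2 i + 1 := by simp [he, Finsupp.single_apply]
      rw [coeff_pd, ← he, this]
      push_cast
      ring

lemma pd_X (i j : Fin 2) : pd i (MvPowerSeries.X j : R2) = if i = j then 1 else 0 := by
  classical
  apply MvPowerSeries.ext; intro d
  rw [coeff_pd, MvPowerSeries.coeff_X]
  by_cases h : i = j
  · subst h
    by_cases hd : d = 0
    · subst hd; simp
    · have : d + Finsupp.single i 1 ≠ Finsupp.single i 1 := by
        intro hcon
        exact hd (add_right_cancel (hcon.trans (zero_add _).symm))
      simp [this, hd, MvPowerSeries.coeff_one, hd]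
  · have : d + Finsupp.single i 1 ≠ Finsupp.single j 1 := by
      intro hcon
      have := DFunLike.congr_fun hcon i
      rw [Finsupp.add_apply, Finsupp.single_apply, Finsupp.single_apply] at this
      simp [h, Ne.symm h] at this
    simp [this, h]
/-- The element `x + ε a` of the dual numbers over `ℂ[[x,y]]`. -/
def Xa (a : R2) : DualNumber R2 := inl (MvPowerSeries.X 0) + eps * inl a

/-- The element `y + ε b` of the dual numbers over `ℂ[[x,y]]`. -/
def Yb (b : R2) : DualNumber R2 := inl (MvPowerSeries.X 1) + eps * inl b

/-- The `n`-th term of the expansion of `f (x + ε a, y + ε b)`. -/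
def termD (a b f : R2) (n : Fin 2 →₀ ℕ) : DualNumber R2 :=
  inl (MvPowerSeries.C (σ := Fin 2) (R := ℂ) (MvPowerSeries.coeff (R := ℂ) n f)) *
    (Xa a ^ (n 0) * Yb b ^ (n 1))

/-- Substitution `f (x + ε a, y + ε b)`, defined coefficientwise: each coefficient of
each component only receives contributions from finitely many terms of the expansion. -/
def substDual (a b f : R2) : DualNumber R2 :=
  TrivSqZeroExt.inl (R := R2) (M := R2) ((fun d => MvPowerSeries.coeff (R := ℂ) d
        (fst (∑ n ∈ Finset.Iic (d + Finsupp.single 0 1 + Finsupp.single 1 1),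
          termD a b f n)) : R2)) +
  TrivSqZeroExt.inr (R := R2) (M := R2) ((fun d => MvPowerSeries.coeff (R := ℂ) d
        (snd (∑ n ∈ Finset.Iic (d + Finsupp.single 0 1 + Finsupp.single 1 1),
          termD a b f n)) : R2))


section Part2
variable (a b : R2)

lemma pd_zero (i : Fin 2) : pd i (0 : R2) = 0 := by
  apply MvPowerSeries.ext; intro d; simp [coeff_pd]

lemma snd_mul' (x y : DualNumber R2) : (x * y).snd = x.fst * y.snd + y.fst * x.snd := by
  rw [TrivSqZeroExt.snd_mul, smul_eq_mul, op_smul_eq_smul, smul_eq_mul]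

lemma eps_mul_inl (g : R2) : (eps * inl g : DualNumber R2) = inr g := by
  apply TrivSqZeroExt.ext <;>
    simp [snd_mul']

lemma fst_Xa : fst (Xa a) = MvPowerSeries.X 0 := by
  rw [Xa, eps_mul_inl]; simp

lemma snd_Xa : snd (Xa a) = a := by
  rw [Xa, eps_mul_inl]; simp

lemma fst_Yb : fst (Yb b) = MvPowerSeries.X 1 := by
  rw [Yb, eps_mul_inl]; simp

lemma snd_Yb : snd (Yb b) = b := by
  rw [Yb, eps_mul_inl]; simp

lemma X0_mem : (MvPowerSeries.X 0 : R2) ∈ Mxy := Ideal.subset_span (by simp)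
lemma X1_mem : (MvPowerSeries.X 1 : R2) ∈ Mxy := Ideal.subset_span (by simp)

/-- Every element of the ideal `⟨Xa, Yb⟩` has first component in `Mxy` and second component
congruent to `a ∂₀ + b ∂₁` of the first, mod `Mxy`. -/
lemma gen_prop : ∀ m ∈ Ideal.span {Xa a, Yb b},
    fst m ∈ Mxy ∧ snd m - a * pd 0 (fst m) - b * pd 1 (fst m) ∈ Mxy := by
  intro m hm
  induction hm using Submodule.span_induction with
  | mem x hx =>
    rcases hx with h | h <;> subst h
    · refine ⟨by rw [fst_Xa]; exact X0_mem, ?_⟩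
      rw [fst_Xa, snd_Xa, pd_X, pd_X]
      norm_num
    · refine ⟨by rw [fst_Yb]; exact X1_mem, ?_⟩
      rw [fst_Yb, snd_Yb, pd_X, pd_X]
      norm_num
  | zero => simp [pd_zero]
  | add x y hx hy ihx ihy =>
    refine ⟨by simp only [fst_add]; exact add_mem ihx.1 ihy.1, ?_⟩
    have : snd (x + y) - a * pd 0 (fst (x + y)) - b * pd 1 (fst (x + y)) =
        (snd x - a * pd 0 (fst x) - b * pd 1 (fst x)) +
        (snd y - a * pd 0 (fst y) - b * pd 1 (fst y)) := by
      rw [fst_add, snd_add, pd_add, pd_add]; ring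
    rw [this]
    exact add_mem ihx.2 ihy.2
  | smul r x hx ihx =>
    rw [smul_eq_mul]
    refine ⟨by rw [fst_mul]; exact Ideal.mul_mem_left _ _ ihx.1, ?_⟩
    have : snd (r * x) - a * pd 0 (fst (r * x)) - b * pd 1 (fst (r * x)) =
        fst r * (snd x - a * pd 0 (fst x) - b * pd 1 (fst x)) +
        fst x * (snd r - a * pd 0 (fst r) - b * pd 1 (fst r)) := by
      rw [fst_mul, snd_mul', pd_mul, pd_mul]; ring
    rw [this]
    exact add_mem (Ideal.mul_mem_left _ _ ihx.2) (Ideal.mul_mem_right _ _ ihx.1)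

/-- Section lemma: every `p ∈ Mxy` lifts to an element of `⟨Xa, Yb⟩` with first
component `p` and second component `≡ a ∂₀ p + b ∂₁ p` mod `Mxy`. -/
lemma gen_section : ∀ p ∈ Mxy,
    ∃ P ∈ Ideal.span {Xa a, Yb b}, fst P = p ∧
      snd P - a * pd 0 p - b * pd 1 p ∈ Mxy := by
  intro p hp
  induction hp using Submodule.span_induction with
  | mem x hx =>
    rcases hx with h | h <;> subst h
    · refine ⟨Xa a, Ideal.subset_span (by simp), fst_Xa a, ?_⟩
      rw [snd_Xa, pd_X, pd_X]
      norm_num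
    · refine ⟨Yb b, Ideal.subset_span (by simp), fst_Yb b, ?_⟩
      rw [snd_Yb, pd_X, pd_X]
      norm_num
  | zero => exact ⟨0, zero_mem _, by simp, by simp [pd_zero]⟩
  | add x y hx hy ihx ihy =>
    obtain ⟨P, hP, hP1, hP2⟩ := ihx
    obtain ⟨Q, hQ, hQ1, hQ2⟩ := ihy
    refine ⟨P + Q, add_mem hP hQ, by rw [fst_add, hP1, hQ1], ?_⟩
    have : snd (P + Q) - a * pd 0 (x + y) - b * pd 1 (x + y) =
        (snd P - a * pd 0 x - b * pd 1 x) + (snd Q - a * pd 0 y - b * pd 1 y) := by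
      rw [snd_add, pd_add, pd_add]; ring
    rw [this]; exact add_mem hP2 hQ2
  | smul r x hx ihx =>
    obtain ⟨P, hP, hP1, hP2⟩ := ihx
    refine ⟨inl r * P, Ideal.mul_mem_left _ _ hP, by rw [fst_mul, fst_inl, hP1, smul_eq_mul], ?_⟩
    rw [smul_eq_mul]
    have : snd (inl r * P) - a * pd 0 (r * x) - b * pd 1 (r * x) =
        r * (snd P - a * pd 0 x - b * pd 1 x) +
        x * ((0 : R2) - a * pd 0 r - b * pd 1 r) := by
      rw [snd_mul', fst_inl, snd_inl, hP1, pd_mul, pd_mul]; ring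
    rw [this]
    exact add_mem (Ideal.mul_mem_left _ _ hP2) (Ideal.mul_mem_right _ _ hx)

end Part2

section Part3
variable (a b : R2)

/-- Forward direction workhorse. -/
lemma mem_pow_prop : ∀ n : ℕ, ∀ x ∈ Ideal.span {Xa a, Yb b} ^ n,
    fst x ∈ Mxy ^ n ∧ snd x - a * pd 0 (fst x) - b * pd 1 (fst x) ∈ Mxy ^ n := by
  intro n x hx
  induction hx using Submodule.pow_induction_on_left' with
  | algebraMap r =>
    simp only [pow_zero, Ideal.one_eq_top]
    exact ⟨Submodule.mem_top, Submodule.mem_top⟩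
  | add x y i hx hy ihx ihy =>
    refine ⟨by rw [fst_add]; exact add_mem ihx.1 ihy.1, ?_⟩
    have : snd (x + y) - a * pd 0 (fst (x + y)) - b * pd 1 (fst (x + y)) =
        (snd x - a * pd 0 (fst x) - b * pd 1 (fst x)) +
        (snd y - a * pd 0 (fst y) - b * pd 1 (fst y)) := by
      rw [fst_add, snd_add, pd_add, pd_add]; ring
    rw [this]; exact add_mem ihx.2 ihy.2
  | mem_mul m hm i x hx ihx =>
    obtain ⟨hm1, hm2⟩ := gen_prop a b m hm
    constructor
    · rw [fst_mul]
      have h := Ideal.mul_mem_mul hm1 ihx.1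
      rwa [← pow_succ'] at h
    · have : snd (m * x) - a * pd 0 (fst (m * x)) - b * pd 1 (fst (m * x)) =
          fst m * (snd x - a * pd 0 (fst x) - b * pd 1 (fst x)) +
          fst x * (snd m - a * pd 0 (fst m) - b * pd 1 (fst m)) := by
        rw [fst_mul, snd_mul', pd_mul, pd_mul]; ring
      rw [this]
      refine add_mem ?_ ?_
      · have h := Ideal.mul_mem_mul hm1 ihx.2
        rwa [← pow_succ'] at h
      · have h := Ideal.mul_mem_mul ihx.1 hm2
        rwa [← pow_succ] at h

/-- `ε · (Mxy ^ n) ⊆ ⟨Xa, Yb⟩ ^ n`. -/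
lemma inr_mem_pow : ∀ n : ℕ, ∀ s ∈ Mxy ^ n,
    (inr s : DualNumber R2) ∈ Ideal.span {Xa a, Yb b} ^ n := by
  intro n s hs
  induction hs using Submodule.pow_induction_on_left' with
  | algebraMap r =>
    exact Submodule.mem_one.mpr ⟨_, rfl⟩
  | add x y i hx hy ihx ihy =>
    have : (inr (x + y) : DualNumber R2) = inr x + inr y := by
      apply TrivSqZeroExt.ext <;> simp
    rw [this]; exact add_mem ihx ihy
  | mem_mul p hp i s hs ihs =>
    obtain ⟨P, hP, hP1, _⟩ := gen_section a b p hp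
    have : (inr (p * s) : DualNumber R2) = inr s * P := by
      apply TrivSqZeroExt.ext
      · simp
      · simp [snd_mul', hP1, mul_comm]
    rw [this]
    exact Submodule.mul_mem_mul ihs hP

/-- Converse direction workhorse. -/
lemma exists_lift : ∀ n : ℕ, ∀ u ∈ Mxy ^ n,
    ∃ v : R2, (inl u + inr v : DualNumber R2) ∈ Ideal.span {Xa a, Yb b} ^ n ∧
      v - a * pd 0 u - b * pd 1 u ∈ Mxy ^ n := by
  intro n u hu
  induction hu using Submodule.pow_induction_on_left' with
  | algebraMap r =>
    refine ⟨a * pd 0 r + b * pd 1 r, Submodule.mem_one.mpr ⟨_, rfl⟩, ?_⟩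
    rw [pow_zero, Ideal.one_eq_top]
    exact Submodule.mem_top
  | add x y i hx hy ihx ihy =>
    obtain ⟨v1, h11, h12⟩ := ihx
    obtain ⟨v2, h21, h22⟩ := ihy
    refine ⟨v1 + v2, ?_, ?_⟩
    · have : (inl (x + y) + inr (v1 + v2) : DualNumber R2) =
          (inl x + inr v1) + (inl y + inr v2) := by
        apply TrivSqZeroExt.ext <;> simp
      rw [this]; exact add_mem h11 h21
    · have : v1 + v2 - a * pd 0 (x + y) - b * pd 1 (x + y) =
          (v1 - a * pd 0 x - b * pd 1 x) + (v2 - a * pd 0 y - b * pd 1 y) := by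
        rw [pd_add, pd_add]; ring
      rw [this]; exact add_mem h12 h22
  | mem_mul p hp i u hu ihu =>
    obtain ⟨v, h1, h2⟩ := ihu
    obtain ⟨P, hP, hP1, hP2⟩ := gen_section a b p hp
    refine ⟨p * v + u * snd P, ?_, ?_⟩
    · have : (inl (p * u) + inr (p * v + u * snd P) : DualNumber R2) =
          (inl u + inr v) * P := by
        apply TrivSqZeroExt.ext
        · simp [hP1, mul_comm]
        · simp [snd_mul', hP1]; ring
      rw [this]
      exact Submodule.mul_mem_mul h1 hP
    · have : p * v + u * snd P - a * pd 0 (p * u) - b * pd 1 (p * u) =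
          p * (v - a * pd 0 u - b * pd 1 u) +
          u * (snd P - a * pd 0 p - b * pd 1 p) := by
        rw [pd_mul, pd_mul]; ring
      rw [this]
      refine add_mem ?_ ?_
      · have h := Ideal.mul_mem_mul hp h2
        rwa [← pow_succ'] at h
      · have h := Ideal.mul_mem_mul hu hP2
        rwa [← pow_succ] at h

end Part3

/-- Equimultiplicity criterion along a given section: `f + ε g ∈ ⟨x + ε a, y + ε b⟩^m`
iff `g - a ∂f/∂x - b ∂f/∂y ∈ ⟨x,y⟩^m`. -/
theorem equimultiple_iff (m : ℕ) (f g a b : R2)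
    (hf : f ∈ Mxy ^ m) (hf' : f ∉ Mxy ^ (m + 1)) :
    (TrivSqZeroExt.inl f + eps * TrivSqZeroExt.inl g : DualNumber R2)
        ∈ Ideal.span {Xa a, Yb b} ^ m
      ↔ g - a * pd 0 f - b * pd 1 f ∈ Mxy ^ m := by
  rw [eps_mul_inl]
  constructor
  · intro h
    have := (mem_pow_prop a b m _ h).2
    simpa using this
  · intro h
    obtain ⟨v, hv1, hv2⟩ := exists_lift a b m f hf
    have hgv : g - v ∈ Mxy ^ m := by
      have : g - v = (g - a * pd 0 f - b * pd 1 f) - (v - a * pd 0 f - b * pd 1 f) := by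
        ring
      rw [this]; exact sub_mem h hv2
    have : (inl f + inr g : DualNumber R2) = (inl f + inr v) + inr (g - v) := by
      apply TrivSqZeroExt.ext <;> simp
    rw [this]
    exact add_mem hv1 (inr_mem_pow a b m _ hgv)


end
end

section
/- Let $m \geq 2$ and let $f \in \mathbb{C}[[x,y]]$ with $\mathrm{ord}(f) = m$, and suppose the degree-$m$ homogeneous part $f_m$ of $f$ has the form $f_m = x^{\mu} y^{\nu} g$ with $\mu, \nu \geq 1$ and $x \nmid g$, $y \nmid g$. Then $\dim_{\mathbb{C}} \mathbb{C}[[x,y]] / \big( \langle \partial f/\partial x, \partial f/\partial y \rangle + \langle x,y \rangle^m \big) = \frac{m(m+1)}{2} - 2$. -/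
set_option synthInstance.maxHeartbeats 1000000
set_option maxHeartbeats 2000000

open MvPowerSeries TrivSqZeroExt DualNumber

noncomputable section

/-! Auxiliary lemmas -/

lemma fin2_finsupp_ext {d e : Fin 2 →₀ ℕ} (h0 : d 0 = e 0) (h1 : d 1 = e 1) : d = e := by
  ext i
  fin_cases i <;> assumption

/-- The ideal of power series whose coefficients vanish below total degree `k`. -/
def Jdeg (k : ℕ) : Ideal R2 where
  carrier := {f | ∀ d : Fin 2 →₀ ℕ, d 0 + d 1 < k → MvPowerSeries.coeff (R := ℂ) d f = 0}
  add_mem' := by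
    intro a b ha hb d hd
    simp [map_add, ha d hd, hb d hd]
  zero_mem' := by intro d hd; simp
  smul_mem' := by
    intro r f hf d hd
    rw [smul_eq_mul, MvPowerSeries.coeff_mul]
    refine Finset.sum_eq_zero fun p hp => ?_
    rw [Finset.HasAntidiagonal.mem_antidiagonal] at hp
    have h2 : p.2 0 + p.2 1 < k := by
      have := congrArg (fun u : Fin 2 →₀ ℕ => u 0) hp
      have := congrArg (fun u : Fin 2 →₀ ℕ => u 1) hp
      simp only [Finsupp.add_apply] at *
      omega
    rw [hf p.2 h2, mul_zero]

lemma pow_le_Jdeg : ∀ k, Mxy ^ k ≤ Jdeg k := by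
  intro k
  induction k with
  | zero => intro f _ d hd; omega
  | succ k ih =>
    rw [pow_succ]
    refine Ideal.mul_le.2 fun r hr s hs => ?_
    intro d hd
    rw [MvPowerSeries.coeff_mul]
    refine Finset.sum_eq_zero fun p hp => ?_
    rw [Finset.HasAntidiagonal.mem_antidiagonal] at hp
    have e0 := congrArg (fun u : Fin 2 →₀ ℕ => u 0) hp
    have e1 := congrArg (fun u : Fin 2 →₀ ℕ => u 1) hp
    simp only [Finsupp.add_apply] at e0 e1
    by_cases hc : p.1 0 + p.1 1 < k
    · rw [ih hr p.1 hc, zero_mul]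
    · have h2 : p.2 0 + p.2 1 < 1 := by omega
      have hp2 : p.2 = 0 := by
        apply fin2_finsupp_ext <;> simp <;> omega
      have hs0 : MvPowerSeries.coeff (R := ℂ) p.2 s = 0 := by
        have : s ∈ Jdeg 1 := by
          revert hs
          refine fun hs => ?_
          have hle : Mxy ≤ Jdeg 1 := by
            rw [Mxy, Ideal.span_le]
            rintro x (rfl | rfl) <;>
            · intro d hd
              have hd0 : d = 0 := by apply fin2_finsupp_ext <;> simp <;> omega
              subst hd0
              rw [MvPowerSeries.coeff_zero_eq_constantCoeff, MvPowerSeries.constantCoeff_X]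
          exact hle hs
        exact this p.2 h2
      rw [hs0, mul_zero]

/-- Converse: coefficient vanishing below `k` implies membership in `Mxy ^ k`. -/
lemma mem_pow_of_vanish : ∀ (k : ℕ) (f : R2),
    (∀ d : Fin 2 →₀ ℕ, d 0 + d 1 < k → MvPowerSeries.coeff (R := ℂ) d f = 0) → f ∈ Mxy ^ k := by
  intro k
  induction k with
  | zero => intro f _; simp
  | succ k ih =>
    intro f hf
    set e0 : Fin 2 →₀ ℕ := Finsupp.single 0 1 with he0
    set e1 : Fin 2 →₀ ℕ := Finsupp.single 1 1 with he1
    set g : R2 := fun d => MvPowerSeries.coeff (R := ℂ) (d + e0) f with hg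
    set h : R2 := fun d => if d 0 = 0 then MvPowerSeries.coeff (R := ℂ) (d + e1) f else 0 with hh
    have key : f = MvPowerSeries.X 0 * g + MvPowerSeries.X 1 * h := by
      ext d
      rw [map_add]
      simp only [MvPowerSeries.X]
      rw [MvPowerSeries.coeff_monomial_mul, MvPowerSeries.coeff_monomial_mul]
      have hcg : MvPowerSeries.coeff (R := ℂ) (d - e0) g = MvPowerSeries.coeff (R := ℂ) ((d - e0) + e0) f := rfl
      have hch : MvPowerSeries.coeff (R := ℂ) (d - e1) h =
          (if (d - e1) 0 = 0 then MvPowerSeries.coeff (R := ℂ) ((d - e1) + e1) f else 0) := rfl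
      by_cases h0 : 1 ≤ d 0
      · have hle : e0 ≤ d := by
          rw [he0, Finsupp.single_le_iff]; exact h0
        rw [if_pos hle, one_mul, hcg, tsub_add_cancel_of_le hle]
        have : ∀ b, (if e1 ≤ d then b * MvPowerSeries.coeff (R := ℂ) (d - e1) h else 0) = 0 := by
          intro b
          split
          · rw [hch, if_neg, mul_zero]
            simp only [Finsupp.tsub_apply, he1, Finsupp.single_apply]
            simp
            omega
          · rfl
        rw [this, add_zero]
      · have hnle : ¬ e0 ≤ d := by
          rw [he0, Finsupp.single_le_iff]; omega
        rw [if_neg hnle]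
        by_cases h1 : 1 ≤ d 1
        · have hle : e1 ≤ d := by rw [he1, Finsupp.single_le_iff]; exact h1
          rw [if_pos hle, one_mul, hch, if_pos, tsub_add_cancel_of_le hle, zero_add]
          simp only [Finsupp.tsub_apply, he1, Finsupp.single_apply]
          simp
          omega
        · have hnle1 : ¬ e1 ≤ d := by rw [he1, Finsupp.single_le_iff]; omega
          rw [if_neg hnle1, add_zero]
          have hd0 : d = 0 := by apply fin2_finsupp_ext <;> simp <;> omega
          subst hd0
          exact hf 0 (by simp)
    rw [key]
    have hgmem : g ∈ Mxy ^ k := by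
      apply ih
      intro d hd
      apply hf
      simp [he0, Finsupp.add_apply]
      omega
    have hhmem : h ∈ Mxy ^ k := by
      apply ih
      intro d hd
      show (if d 0 = 0 then MvPowerSeries.coeff (R := ℂ) (d + e1) f else 0) = 0
      split
      · apply hf; simp [he1, Finsupp.add_apply]; omega
      · rfl
    have hX0 : MvPowerSeries.X (0 : Fin 2) ∈ Mxy := Ideal.subset_span (by simp)
    have hX1 : MvPowerSeries.X (1 : Fin 2) ∈ Mxy := Ideal.subset_span (by simp)
    have : Mxy ^ (k + 1) = Mxy * Mxy ^ k := by rw [pow_succ, mul_comm]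
    rw [this]
    exact Ideal.add_mem _ (Ideal.mul_mem_mul hX0 hgmem) (Ideal.mul_mem_mul hX1 hhmem)

open MvPolynomial in
lemma coeff_pderiv (i : Fin 2) (p : MvPolynomial (Fin 2) ℂ) (d : Fin 2 →₀ ℕ) :
    MvPolynomial.coeff d (MvPolynomial.pderiv i p)
      = ((d i : ℂ) + 1) * MvPolynomial.coeff (d + Finsupp.single i 1) p := by
  induction p using MvPolynomial.induction_on' with
  | monomial s a =>
    rw [pderiv_monomial, MvPolynomial.coeff_monomial, MvPolynomial.coeff_monomial]
    by_cases hs : 1 ≤ s i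
    · have hiff : (s - Finsupp.single i 1 = d) ↔ (s = d + Finsupp.single i 1) := by
        constructor
        · rintro rfl
          ext j
          simp only [Finsupp.add_apply, Finsupp.tsub_apply, Finsupp.single_apply]
          by_cases hj : i = j
          · subst hj; simp; omega
          · simp [hj]
        · rintro rfl
          ext j
          simp only [Finsupp.add_apply, Finsupp.tsub_apply, Finsupp.single_apply]
          by_cases hj : i = j
          · subst hj; simp
          · simp [hj]
      by_cases hd : s - Finsupp.single i 1 = d
      · rw [if_pos hd, if_pos (hiff.1 hd)]
        have : s i = d i + 1 := by
          subst hd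
          simp [Finsupp.tsub_apply, Finsupp.single_apply]
          omega
        rw [this]
        push_cast
        ring
      · rw [if_neg hd, if_neg (fun h => hd (hiff.2 h))]
        ring
    · have h0 : s i = 0 := by omega
      have hne : ¬ (s = d + Finsupp.single i 1) := by
        intro h
        have := congrArg (fun u : Fin 2 →₀ ℕ => u i) h
        simp [Finsupp.add_apply, Finsupp.single_apply] at this
        omega
      rw [if_neg hne, h0]
      split <;> simp
  | add p q hp hq =>
    rw [map_add, coeff_add, coeff_add, hp, hq]
    ring

open MvPolynomial in
lemma prime_X0 : Prime (MvPolynomial.X (0 : Fin 2) : MvPolynomial (Fin 2) ℂ) := by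
  rw [← MulEquiv.prime_iff (MvPolynomial.finSuccEquiv ℂ 1)]
  show Prime (MvPolynomial.finSuccEquiv ℂ 1 (X 0))
  rw [MvPolynomial.finSuccEquiv_X_zero]
  exact Polynomial.prime_X

open MvPolynomial in
lemma prime_X1 : Prime (MvPolynomial.X (1 : Fin 2) : MvPolynomial (Fin 2) ℂ) := by
  rw [← MulEquiv.prime_iff (MvPolynomial.finSuccEquiv ℂ 1)]
  show Prime (MvPolynomial.finSuccEquiv ℂ 1 (X 1))
  have : (1 : Fin 2) = (0 : Fin 1).succ := rfl
  rw [this, MvPolynomial.finSuccEquiv_X_succ]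
  rw [Polynomial.prime_C_iff]
  rw [← MulEquiv.prime_iff (MvPolynomial.finSuccEquiv ℂ 0)]
  show Prime (MvPolynomial.finSuccEquiv ℂ 0 (X 0))
  rw [MvPolynomial.finSuccEquiv_X_zero]
  exact Polynomial.prime_X

open MvPolynomial in
lemma X0_not_dvd_X1 : ¬ (MvPolynomial.X (0 : Fin 2) : MvPolynomial (Fin 2) ℂ) ∣ X 1 := by
  rintro ⟨c, hc⟩
  have := congrArg (MvPolynomial.eval (fun i : Fin 2 => if i = 0 then 0 else 1)) hc
  simp at this

open MvPolynomial in
lemma X1_not_dvd_X0 : ¬ (MvPolynomial.X (1 : Fin 2) : MvPolynomial (Fin 2) ℂ) ∣ X 0 := by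
  rintro ⟨c, hc⟩
  have := congrArg (MvPolynomial.eval (fun i : Fin 2 => if i = 1 then 0 else 1)) hc
  simp at this

open MvPolynomial in
lemma dvd_of_dvd_C_mul {a : ℂ} (ha : a ≠ 0) {p q : MvPolynomial (Fin 2) ℂ}
    (h : p ∣ MvPolynomial.C a * q) : p ∣ q := by
  obtain ⟨c, hc⟩ := h
  refine ⟨MvPolynomial.C a⁻¹ * c, ?_⟩
  have : MvPolynomial.C (a⁻¹) * (MvPolynomial.C a * q) = MvPolynomial.C (a⁻¹) * (p * c) := by rw [hc]
  rwa [← mul_assoc, ← MvPolynomial.C_mul, inv_mul_cancel₀ ha, MvPolynomial.C_1, one_mul,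
    ← mul_assoc, mul_comm (MvPolynomial.C a⁻¹) p, mul_assoc] at this

def Dm (m : ℕ) : Finset (Fin 2 →₀ ℕ) :=
  ((Finset.range m).biUnion (fun k => Finset.HasAntidiagonal.antidiagonal k)).image
    (fun p => Finsupp.single 0 p.1 + Finsupp.single 1 p.2)

lemma mem_Dm {m : ℕ} {d : Fin 2 →₀ ℕ} : d ∈ Dm m ↔ d 0 + d 1 < m := by
  constructor
  · intro hd
    rw [Dm, Finset.mem_image] at hd
    obtain ⟨p, hp, rfl⟩ := hd
    simp only [Finset.mem_biUnion, Finset.mem_range, Finset.HasAntidiagonal.mem_antidiagonal] at hp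
    obtain ⟨k, hk, hpk⟩ := hp
    simp only [Finsupp.add_apply, Finsupp.single_apply]
    norm_num
    omega
  · intro hd
    rw [Dm, Finset.mem_image]
    refine ⟨(d 0, d 1), ?_, ?_⟩
    · simp only [Finset.mem_biUnion, Finset.mem_range, Finset.HasAntidiagonal.mem_antidiagonal]
      exact ⟨d 0 + d 1, hd, rfl⟩
    · apply fin2_finsupp_ext <;> simp [Finsupp.add_apply, Finsupp.single_apply]

lemma card_Dm (m : ℕ) : (Dm m).card = m * (m + 1) / 2 := by
  rw [Dm, Finset.card_image_of_injOn]
  · rw [Finset.card_biUnion]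
    · have : ∀ k ∈ Finset.range m, (Finset.HasAntidiagonal.antidiagonal k).card = k + 1 := by
        intro k _; exact Finset.Nat.card_antidiagonal k
      rw [Finset.sum_congr rfl this]
      have h2 : (∑ k ∈ Finset.range m, (k + 1)) * 2 = m * (m + 1) := by
        rw [Finset.sum_add_distrib, add_mul, Finset.sum_range_id_mul_two]
        simp only [Finset.sum_const, Finset.card_range, smul_eq_mul, mul_one]
        cases m with
        | zero => rfl
        | succ n => simp [Nat.succ_sub_one]; ring
      omega
    · intro k _ l _ hkl
      simp only [Finset.disjoint_left, Finset.HasAntidiagonal.mem_antidiagonal]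
      rintro p rfl h
      exact hkl h
  · rintro p hp q hq hpq
    have h0 := congrArg (fun u : Fin 2 →₀ ℕ => u 0) hpq
    have h1 := congrArg (fun u : Fin 2 →₀ ℕ => u 1) hpq
    simp [Finsupp.add_apply, Finsupp.single_apply] at h0 h1
    exact Prod.ext h0 h1

def phi (m : ℕ) : R2 →ₗ[ℂ] ((↥(Dm m)) → ℂ) :=
  LinearMap.pi fun d => MvPowerSeries.coeff (R := ℂ) (d : Fin 2 →₀ ℕ)

lemma phi_surj (m : ℕ) : Function.Surjective (phi m) := by
  intro v
  refine ⟨(fun d => if h : d ∈ Dm m then v ⟨d, h⟩ else 0 : R2), ?_⟩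
  funext d
  simp only [phi, LinearMap.pi_apply, MvPowerSeries.coeff_apply]
  exact dif_pos d.2

lemma ker_phi (m : ℕ) : LinearMap.ker (phi m) = (Mxy ^ m).restrictScalars ℂ := by
  ext f
  rw [LinearMap.mem_ker, Submodule.restrictScalars_mem]
  constructor
  · intro h
    apply mem_pow_of_vanish m f
    intro d hd
    have := congrFun h ⟨d, mem_Dm.2 hd⟩
    exact this
  · intro h
    funext d
    exact pow_le_Jdeg m h d (mem_Dm.1 d.2)

lemma smul_eq_Cmul (c : ℂ) (h : R2) : c • h = MvPowerSeries.C (σ := Fin 2) (R := ℂ) c * h := by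
  rw [MvPowerSeries.c_eq_algebraMap, ← Algebra.smul_def]

lemma main_count (m : ℕ) (hm : 1 ≤ m) (fx fy : R2)
    (hfx : fx ∈ Mxy ^ (m - 1)) (hfy : fy ∈ Mxy ^ (m - 1))
    (hli : LinearIndependent ℂ ![phi m fx, phi m fy]) :
    Module.finrank ℂ (R2 ⧸ (Ideal.span {fx, fy} + Mxy ^ m)) = m * (m + 1) / 2 - 2 := by
  classical
  set I : Ideal R2 := Ideal.span {fx, fy} + Mxy ^ m with hI
  set v1 := phi m fx
  set v2 := phi m fy
  set W : Submodule ℂ ((↥(Dm m)) → ℂ) := Submodule.span ℂ {v1, v2} with hW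
  set ψ : R2 →ₗ[ℂ] (((↥(Dm m)) → ℂ) ⧸ W) := W.mkQ.comp (phi m) with hψ
  have hmulmem : ∀ r h : R2, h ∈ Mxy ^ (m - 1) → MvPowerSeries.constantCoeff (σ := Fin 2) (R := ℂ) r = 0 →
      r * h ∈ Mxy ^ m := by
    intro r h hh hr
    have hrm : r ∈ Mxy := by
      have := mem_pow_of_vanish 1 r ?_
      · rwa [pow_one] at this
      · intro d hd
        have hd0 : d = 0 := by
          apply fin2_finsupp_ext <;> simp <;> omega
        subst hd0
        exact hr
    have : r * h ∈ Mxy * Mxy ^ (m - 1) := Ideal.mul_mem_mul hrm hh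
    rwa [← pow_succ', Nat.sub_add_cancel hm] at this
  have hdecomp : ∀ r h : R2, h ∈ Mxy ^ (m - 1) → ∃ c : ℂ, r * h - c • h ∈ Mxy ^ m := by
    intro r h hh
    refine ⟨MvPowerSeries.constantCoeff (σ := Fin 2) (R := ℂ) r, ?_⟩
    rw [smul_eq_Cmul, ← sub_mul]
    apply hmulmem _ _ hh
    simp
  have hkerψ : LinearMap.ker ψ = I.restrictScalars ℂ := by
    ext f'
    rw [LinearMap.mem_ker, Submodule.restrictScalars_mem, hψ, LinearMap.comp_apply,
      Submodule.mkQ_apply, Submodule.Quotient.mk_eq_zero]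
    constructor
    · intro h
      have h2 : phi m f' ∈ W := h
      rw [hW, Submodule.mem_span_pair] at h2
      obtain ⟨a, b, hab⟩ := h2
      have hmem : f' - a • fx - b • fy ∈ Mxy ^ m := by
        have h3 : phi m (f' - a • fx - b • fy) = 0 := by
          rw [map_sub, map_sub, map_smul, map_smul, ← hab]
          abel
        have h4 := (LinearMap.mem_ker (f := phi m)).2 h3
        rw [ker_phi, Submodule.restrictScalars_mem] at h4
        exact h4
      have h5 : f' = (a • fx + b • fy) + (f' - a • fx - b • fy) := by abel
      rw [hI, h5]
      apply Submodule.add_mem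
      · apply Ideal.mem_sup_left
        apply Submodule.add_mem
        · exact Submodule.smul_of_tower_mem _ a (Ideal.subset_span (by simp))
        · exact Submodule.smul_of_tower_mem _ b (Ideal.subset_span (by simp))
      · exact Ideal.mem_sup_right hmem
    · intro h
      rw [hI] at h
      obtain ⟨u, hu, v, hv, rfl⟩ := Submodule.mem_sup.1 h
      rw [Ideal.mem_span_pair] at hu
      obtain ⟨r, st, rfl⟩ := hu
      obtain ⟨cr, hcr⟩ := hdecomp r fx hfx
      obtain ⟨cs, hcs⟩ := hdecomp st fy hfy
      have hv0 : phi m v = 0 := by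
        have h6 : v ∈ LinearMap.ker (phi m) := by
          rw [ker_phi, Submodule.restrictScalars_mem]; exact hv
        exact h6
      have hcr0 : phi m (r * fx - cr • fx) = 0 := by
        have h7 : (r * fx - cr • fx) ∈ LinearMap.ker (phi m) := by
          rw [ker_phi, Submodule.restrictScalars_mem]; exact hcr
        exact h7
      have hcs0 : phi m (st * fy - cs • fy) = 0 := by
        have h8 : (st * fy - cs • fy) ∈ LinearMap.ker (phi m) := by
          rw [ker_phi, Submodule.restrictScalars_mem]; exact hcs
        exact h8
      rw [map_sub, map_smul] at hcr0 hcs0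
      have h9 : phi m (r * fx + st * fy + v) = cr • v1 + cs • v2 := by
        rw [map_add, map_add, hv0, add_zero]
        have e1 : phi m (r * fx) = cr • v1 := by
          have := sub_eq_zero.1 hcr0; rw [this]
        have e2 : phi m (st * fy) = cs • v2 := by
          have := sub_eq_zero.1 hcs0; rw [this]
        rw [e1, e2]
      show phi m _ ∈ W
      rw [h9, hW]
      exact Submodule.add_mem _
        (Submodule.smul_mem _ _ (Submodule.subset_span (by simp)))
        (Submodule.smul_mem _ _ (Submodule.subset_span (by simp)))
  have hψsurj : Function.Surjective ψ := by
    rw [hψ]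
    exact (Submodule.mkQ_surjective W).comp (phi_surj m)
  have e1 : (R2 ⧸ I.restrictScalars ℂ) ≃ₗ[ℂ] (((↥(Dm m)) → ℂ) ⧸ W) := by
    rw [← hkerψ]
    exact ψ.quotKerEquivOfSurjective hψsurj
  have e2 : (R2 ⧸ I) ≃ₗ[ℂ] (R2 ⧸ I.restrictScalars ℂ) :=
    (Submodule.Quotient.restrictScalarsEquiv ℂ (I : Submodule R2 R2)).symm
  have hrank : Module.finrank ℂ (R2 ⧸ I) = Module.finrank ℂ ((((↥(Dm m)) → ℂ)) ⧸ W) :=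
    (e2.trans e1).finrank_eq
  have hWrank : Module.finrank ℂ W = 2 := by
    have hset : Set.range ![v1, v2] = {v1, v2} := by
      simp [Matrix.range_cons, Matrix.range_empty]
      exact Set.pair_comm v2 v1
    rw [hW, ← hset, finrank_span_eq_card hli]
    simp
  have hErank : Module.finrank ℂ ((↥(Dm m)) → ℂ) = m * (m + 1) / 2 := by
    rw [Module.finrank_pi, Fintype.card_coe, card_Dm]
  have := Submodule.finrank_quotient_add_finrank W
  rw [hrank, hWrank] at *
  omega


/-- At a non-unitangential `m`-fold point (tangent cone `f_m = x^μ y^ν g` with two of the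
tangents being the axes), the colength of `⟨f_x, f_y⟩ + ⟨x,y⟩^m` is `m(m+1)/2 - 2`. -/
theorem colength_not_unitangential (m μ ν : ℕ) (hm : 2 ≤ m) (f : R2)
    (hf : f ∈ Mxy ^ m) (hf' : f ∉ Mxy ^ (m + 1))
    (fm g : MvPolynomial (Fin 2) ℂ) (hfm : fm.IsHomogeneous m)
    (hcoeff : ∀ d : Fin 2 →₀ ℕ, d 0 + d 1 = m →
      MvPolynomial.coeff d fm = MvPowerSeries.coeff (R := ℂ) d f)
    (hμ : 1 ≤ μ) (hν : 1 ≤ ν)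
    (heq : fm = MvPolynomial.X 0 ^ μ * MvPolynomial.X 1 ^ ν * g)
    (hgx : ¬ MvPolynomial.X 0 ∣ g) (hgy : ¬ MvPolynomial.X 1 ∣ g) :
    Module.finrank ℂ
        (R2 ⧸ (Ideal.span {pd 0 f, pd 1 f} + Mxy ^ m))
      = m * (m + 1) / 2 - 2 := by
  classical
  have hpdco : ∀ (i : Fin 2) (h : R2) (d : Fin 2 →₀ ℕ),
      MvPowerSeries.coeff (R := ℂ) d (pd i h)
        = ((d i : ℂ) + 1) * MvPowerSeries.coeff (R := ℂ) (d + Finsupp.single i 1) h :=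
    fun i h d => rfl
  have hsum0 : ∀ d : Fin 2 →₀ ℕ,
      (d + Finsupp.single 0 1 : Fin 2 →₀ ℕ) 0 + (d + Finsupp.single 0 1 : Fin 2 →₀ ℕ) 1 = d 0 + d 1 + 1 := by
    intro d
    simp [Finsupp.add_apply, Finsupp.single_apply]
    omega
  have hsum1 : ∀ d : Fin 2 →₀ ℕ,
      (d + Finsupp.single 1 1 : Fin 2 →₀ ℕ) 0 + (d + Finsupp.single 1 1 : Fin 2 →₀ ℕ) 1 = d 0 + d 1 + 1 := by
    intro d
    simp [Finsupp.add_apply, Finsupp.single_apply]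
    omega
  have hfx : pd 0 f ∈ Mxy ^ (m - 1) := by
    apply mem_pow_of_vanish
    intro d hd
    rw [hpdco, pow_le_Jdeg m hf _ (by rw [hsum0]; omega), mul_zero]
  have hfy : pd 1 f ∈ Mxy ^ (m - 1) := by
    apply mem_pow_of_vanish
    intro d hd
    rw [hpdco, pow_le_Jdeg m hf _ (by rw [hsum1]; omega), mul_zero]
  have hdeg2 : ∀ d : Fin 2 →₀ ℕ, d.degree = d 0 + d 1 := by
    intro d
    rw [Finsupp.degree_apply,
      Finset.sum_subset (Finset.subset_univ _) (fun i _ hi => Finsupp.notMem_support_iff.mp hi),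
      Fin.sum_univ_two]
  have hli : LinearIndependent ℂ ![phi m (pd 0 f), phi m (pd 1 f)] := by
    rw [LinearIndependent.pair_iff]
    intro s t hst0
    have hst : ∀ d : Fin 2 →₀ ℕ, d 0 + d 1 < m →
        s * MvPowerSeries.coeff (R := ℂ) d (pd 0 f) + t * MvPowerSeries.coeff (R := ℂ) d (pd 1 f) = 0 := by
      intro d hd
      have := congrFun hst0 ⟨d, mem_Dm.2 hd⟩
      simpa [phi, LinearMap.pi_apply, Pi.add_apply, Pi.smul_apply, smul_eq_mul] using this
    have hP : MvPolynomial.C s * MvPolynomial.pderiv 0 fm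
        + MvPolynomial.C t * MvPolynomial.pderiv 1 fm = 0 := by
      apply MvPolynomial.ext
      intro d
      rw [MvPolynomial.coeff_add, MvPolynomial.coeff_zero, MvPolynomial.coeff_C_mul,
        MvPolynomial.coeff_C_mul, coeff_pderiv, coeff_pderiv]
      by_cases hd : d 0 + d 1 + 1 = m
      · rw [hcoeff _ (by rw [hsum0]; omega), hcoeff _ (by rw [hsum1]; omega)]
        have h1 := hst d (by omega)
        rw [hpdco, hpdco] at h1
        linear_combination h1
      · rw [hfm.coeff_eq_zero (by rw [hdeg2, hsum0]; omega),
          hfm.coeff_eq_zero (by rw [hdeg2, hsum1]; omega)]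
        ring
    obtain ⟨μ', rfl⟩ : ∃ μ', μ = μ' + 1 := ⟨μ - 1, by omega⟩
    obtain ⟨ν', rfl⟩ : ∃ ν', ν = ν' + 1 := ⟨ν - 1, by omega⟩
    set A : MvPolynomial (Fin 2) ℂ := MvPolynomial.C s *
      (((μ' + 1 : ℕ) : MvPolynomial (Fin 2) ℂ) * g
        + MvPolynomial.X 0 * MvPolynomial.pderiv 0 g) with hA
    set B : MvPolynomial (Fin 2) ℂ := MvPolynomial.C t *
      (((ν' + 1 : ℕ) : MvPolynomial (Fin 2) ℂ) * g
        + MvPolynomial.X 1 * MvPolynomial.pderiv 1 g) with hB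
    have hfac : MvPolynomial.X 0 ^ μ' * MvPolynomial.X 1 ^ ν'
        * (MvPolynomial.X 1 * A + MvPolynomial.X 0 * B) = 0 := by
      rw [← hP, heq, hA, hB]
      simp only [MvPolynomial.pderiv_mul, MvPolynomial.pderiv_pow,
        MvPolynomial.pderiv_X_self,
        MvPolynomial.pderiv_X_of_ne (show (1 : Fin 2) ≠ 0 by decide),
        MvPolynomial.pderiv_X_of_ne (show (0 : Fin 2) ≠ 1 by decide),
        Nat.add_sub_cancel, mul_one, mul_zero, zero_mul, add_zero, zero_add]
      ring
    have hQ : MvPolynomial.X 1 * A + MvPolynomial.X 0 * B = 0 := by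
      rcases mul_eq_zero.1 hfac with h | h
      · rcases mul_eq_zero.1 h with h' | h'
        · exact absurd h' (pow_ne_zero _ (MvPolynomial.X_ne_zero _))
        · exact absurd h' (pow_ne_zero _ (MvPolynomial.X_ne_zero _))
      · exact h
    have hcastμ : ((μ' + 1 : ℕ) : MvPolynomial (Fin 2) ℂ)
        = MvPolynomial.C ((μ' + 1 : ℕ) : ℂ) := by
      rw [map_natCast (MvPolynomial.C : ℂ →+* MvPolynomial (Fin 2) ℂ)]
    have hcastν : ((ν' + 1 : ℕ) : MvPolynomial (Fin 2) ℂ)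
        = MvPolynomial.C ((ν' + 1 : ℕ) : ℂ) := by
      rw [map_natCast (MvPolynomial.C : ℂ →+* MvPolynomial (Fin 2) ℂ)]
    have hcne : ∀ k : ℕ, ((k + 1 : ℕ) : ℂ) ≠ 0 := by
      intro k
      exact Nat.cast_ne_zero.2 (Nat.succ_ne_zero k)
    constructor
    · by_contra hs
      have hdvd : (MvPolynomial.X 0 : MvPolynomial (Fin 2) ℂ) ∣ MvPolynomial.X 1 * A :=
        ⟨-B, by linear_combination hQ⟩
      have hdvdA := (prime_X0.2.2 _ _ hdvd).resolve_left X0_not_dvd_X1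
      rw [hA] at hdvdA
      obtain ⟨w, hw⟩ := dvd_of_dvd_C_mul hs hdvdA
      have hdg : (MvPolynomial.X 0 : MvPolynomial (Fin 2) ℂ)
          ∣ ((μ' + 1 : ℕ) : MvPolynomial (Fin 2) ℂ) * g :=
        ⟨w - MvPolynomial.pderiv 0 g, by linear_combination hw⟩
      rw [hcastμ] at hdg
      exact hgx (dvd_of_dvd_C_mul (hcne μ') hdg)
    · by_contra ht
      have hdvd : (MvPolynomial.X 1 : MvPolynomial (Fin 2) ℂ) ∣ MvPolynomial.X 0 * B :=
        ⟨-A, by linear_combination hQ⟩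
      have hdvdB := (prime_X1.2.2 _ _ hdvd).resolve_left X1_not_dvd_X0
      rw [hB] at hdvdB
      obtain ⟨w, hw⟩ := dvd_of_dvd_C_mul ht hdvdB
      have hdg : (MvPolynomial.X 1 : MvPolynomial (Fin 2) ℂ)
          ∣ ((ν' + 1 : ℕ) : MvPolynomial (Fin 2) ℂ) * g :=
        ⟨w - MvPolynomial.pderiv 1 g, by linear_combination hw⟩
      rw [hcastν] at hdg
      exact hgy (dvd_of_dvd_C_mul (hcne ν') hdg)
  exact main_count m (by omega) (pd 0 f) (pd 1 f) hfx hfy hli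

end
end
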